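/- Let 0 < s < 1 and let f be a finite linear combination of Haar functions. Then f = (2^s − 1) · T_s(D^s f), where T_s g = Σ_{I∈𝒟} |I|^s ⟨g⟩_I 1_I and D^s f = Σ_{I∈𝒟} |I|^{-s} (f, h_I) h_I. -/

import Mathlib

open MeasureTheory Filter
open scoped ENNReal Classical Topology

noncomputable section

/-- The standard dyadic interval `[k·2^n, (k+1)·2^n)`. -/
def dyadic (n k : ℤ) : Set ℝ := Set.Ico ((k : ℝ) * 2 ^ n) (((k : ℝ) + 1) * 2 ^ n)

/-- The Haar function associated with `dyadic n k`:
`h_I = |I|^{-1/2} (1_{I_+} - 1_{I_-})`. -/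
def haar (n k : ℤ) : ℝ → ℝ := fun x =>
  (2 : ℝ) ^ (-(n : ℝ) / 2) *
    ((dyadic (n - 1) (2 * k + 1)).indicator 1 x - (dyadic (n - 1) (2 * k)).indicator 1 x)

/-- The constant value of `haar n k` on the dyadic subinterval `dyadic m j`
(its value at the left endpoint of that subinterval). -/
def haarVal (n k m j : ℤ) : ℝ := haar n k ((j : ℝ) * 2 ^ m)

/-- Haar coefficient `(f, h_I)`. -/
def innH (f : ℝ → ℝ) (n k : ℤ) : ℝ := ∫ x, f x * haar n k x

/-- Dyadic average `⟨f⟩_I = |I|⁻¹ ∫_I f`. -/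
def avg (f : ℝ → ℝ) (n k : ℤ) : ℝ := (2 : ℝ) ^ (-n) * ∫ x in dyadic n k, f x

/-- The linear span of the Haar functions. -/
def haarSpan : Submodule ℝ (ℝ → ℝ) :=
  Submodule.span ℝ (Set.range fun p : ℤ × ℤ => haar p.1 p.2)

end

/-- The dyadic fractional integral of order s. -/
noncomputable def Ts (s : ℝ) (g : ℝ → ℝ) : ℝ → ℝ := fun x =>
  ∑' p : ℤ × ℤ, (2 : ℝ) ^ ((p.1 : ℝ) * s) * avg g p.1 p.2 * (dyadic p.1 p.2).indicator 1 x

/-- The dyadic fractional derivative of order s. -/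
noncomputable def Ds (s : ℝ) (f : ℝ → ℝ) : ℝ → ℝ := fun x =>
  ∑' p : ℤ × ℤ, (2 : ℝ) ^ (-(p.1 : ℝ) * s) * innH f p.1 p.2 * haar p.1 p.2 x

namespace DyadicMSAux

lemma two_zpow_pos (n : ℤ) : (0:ℝ) < 2 ^ n := zpow_pos (by norm_num) n

lemma measurableSet_dyadic (n k : ℤ) : MeasurableSet (dyadic n k) := measurableSet_Ico

lemma volume_dyadic (n k : ℤ) : volume (dyadic n k) = ENNReal.ofReal (2 ^ n) := by
  rw [dyadic, Real.volume_Ico]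
  congr 1
  ring

lemma volume_dyadic_toReal (n k : ℤ) : (volume (dyadic n k)).toReal = 2 ^ n := by
  rw [volume_dyadic, ENNReal.toReal_ofReal (two_zpow_pos n).le]

lemma mem_dyadic {n k : ℤ} {x : ℝ} :
    x ∈ dyadic n k ↔ (k:ℝ) * 2 ^ n ≤ x ∧ x < ((k:ℝ) + 1) * 2 ^ n := Set.mem_Ico

lemma mem_dyadic_iff {n k : ℤ} {x : ℝ} : x ∈ dyadic n k ↔ ⌊x / 2 ^ n⌋ = k := by
  have hp := two_zpow_pos n
  rw [mem_dyadic]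
  constructor
  · rintro ⟨h1, h2⟩
    rw [Int.floor_eq_iff]
    constructor
    · rw [le_div_iff₀ hp]; linarith
    · rw [div_lt_iff₀ hp]; push_cast; linarith
  · intro h
    have h1 := Int.floor_le (x / 2 ^ n)
    have h2 := Int.lt_floor_add_one (x / 2 ^ n)
    rw [h] at h1 h2
    rw [le_div_iff₀ hp] at h1
    rw [div_lt_iff₀ hp] at h2
    refine ⟨h1, ?_⟩
    push_cast at h2
    linarith

lemma left_mem_dyadic (n k : ℤ) : (k:ℝ) * 2 ^ n ∈ dyadic n k := by
  rw [mem_dyadic]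
  have := two_zpow_pos n
  exact ⟨le_rfl, by nlinarith⟩

lemma dyadic_disjoint {n k j : ℤ} (h : k ≠ j) : Disjoint (dyadic n k) (dyadic n j) := by
  rw [Set.disjoint_left]
  intro x hx hx'
  rw [mem_dyadic_iff] at hx hx'
  exact h (hx ▸ hx')

lemma two_zpow_diff {n m : ℤ} (h : n ≤ m) : (2:ℝ) ^ m = 2 ^ n * 2 ^ ((m - n).toNat) := by
  rw [← zpow_natCast (2:ℝ) (m - n).toNat, ← zpow_add₀ (two_ne_zero : (2:ℝ) ≠ 0)]
  congr 1
  omega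

lemma subset_or_disjoint {n m k j : ℤ} (h : n ≤ m) :
    dyadic n k ⊆ dyadic m j ∨ Disjoint (dyadic n k) (dyadic m j) := by
  rcases Set.disjoint_or_nonempty_inter (dyadic n k) (dyadic m j) with hd | ⟨x, hx1, hx2⟩
  · exact Or.inr hd
  left
  rw [mem_dyadic] at hx1 hx2
  have h2 : (2:ℝ) ^ m = 2 ^ n * 2 ^ ((m - n).toNat) := two_zpow_diff h
  have hp := two_zpow_pos n
  rw [h2] at hx2
  have hji : j * (2:ℤ) ^ ((m - n).toNat) ≤ k := by
    have hr : (j:ℝ) * 2 ^ ((m - n).toNat) < (k:ℝ) + 1 := by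
      by_contra hc
      push_neg at hc
      have h3 := mul_le_mul_of_nonneg_right hc hp.le
      nlinarith [hx1.2, hx2.1, h3, hp]
    have hi : (j * (2:ℤ) ^ ((m - n).toNat) : ℤ) < k + 1 := by exact_mod_cast hr
    omega
  have hkj : k + 1 ≤ (j + 1) * (2:ℤ) ^ ((m - n).toNat) := by
    have hr : (k:ℝ) < ((j:ℝ) + 1) * 2 ^ ((m - n).toNat) := by
      by_contra hc
      push_neg at hc
      have h3 := mul_le_mul_of_nonneg_right hc hp.le
      nlinarith [hx1.1, hx2.2, h3, hp]
    have hi : (k : ℤ) < (j + 1) * (2:ℤ) ^ ((m - n).toNat) := by exact_mod_cast hr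
    omega
  have hji' : (j:ℝ) * 2 ^ ((m - n).toNat) ≤ k := by exact_mod_cast hji
  have hkj' : (k:ℝ) + 1 ≤ ((j:ℝ) + 1) * 2 ^ ((m - n).toNat) := by exact_mod_cast hkj
  intro y hy
  rw [mem_dyadic] at hy ⊢
  rw [h2]
  constructor
  · have h3 := mul_le_mul_of_nonneg_right hji' hp.le
    nlinarith [hy.1, h3]
  · have h3 := mul_le_mul_of_nonneg_right hkj' hp.le
    nlinarith [hy.2, h3]

lemma two_zpow_half (n : ℤ) : (2:ℝ) ^ n = 2 ^ (n - 1) * 2 := by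
  rw [← zpow_add_one₀ (two_ne_zero : (2:ℝ) ≠ 0)]
  congr 1
  omega

lemma half_left_subset (n k : ℤ) : dyadic (n - 1) (2 * k) ⊆ dyadic n k := by
  intro x hx
  rw [mem_dyadic] at hx ⊢
  rw [two_zpow_half n]
  have hp := two_zpow_pos (n - 1)
  push_cast at hx
  constructor <;> nlinarith [hx.1, hx.2]

lemma half_right_subset (n k : ℤ) : dyadic (n - 1) (2 * k + 1) ⊆ dyadic n k := by
  intro x hx
  rw [mem_dyadic] at hx ⊢
  rw [two_zpow_half n]
  have hp := two_zpow_pos (n - 1)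
  push_cast at hx
  constructor <;> nlinarith [hx.1, hx.2]

lemma haar_eq_zero {N K : ℤ} {x : ℝ} (hx : x ∉ dyadic N K) : haar N K x = 0 := by
  have h1 : x ∉ dyadic (N - 1) (2 * K + 1) := fun h => hx (half_right_subset N K h)
  have h2 : x ∉ dyadic (N - 1) (2 * K) := fun h => hx (half_left_subset N K h)
  simp [haar, Set.indicator_of_notMem h1, Set.indicator_of_notMem h2]

lemma haar_pos {N K : ℤ} {x : ℝ} (hx : x ∈ dyadic (N - 1) (2 * K + 1)) :
    haar N K x = 2 ^ (-(N:ℝ) / 2) := by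
  have h2 : x ∉ dyadic (N - 1) (2 * K) :=
    Set.disjoint_left.1 (dyadic_disjoint (by omega : (2*K+1 : ℤ) ≠ 2*K)) hx
  simp [haar, Set.indicator_of_mem hx, Set.indicator_of_notMem h2]

lemma haar_neg {N K : ℤ} {x : ℝ} (hx : x ∈ dyadic (N - 1) (2 * K)) :
    haar N K x = -(2 ^ (-(N:ℝ) / 2)) := by
  have h2 : x ∉ dyadic (N - 1) (2 * K + 1) :=
    Set.disjoint_left.1 (dyadic_disjoint (by omega : (2*K : ℤ) ≠ 2*K+1)) hx
  simp [haar, Set.indicator_of_mem hx, Set.indicator_of_notMem h2]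

lemma haar_constOn {N K n k : ℤ} (hn : n < N) {x : ℝ} (hx : x ∈ dyadic n k) :
    haar N K x = haarVal N K n k := by
  have hx0 : (k:ℝ) * 2 ^ n ∈ dyadic n k := left_mem_dyadic n k
  have key : ∀ j : ℤ, (dyadic (N - 1) j).indicator (1 : ℝ → ℝ) x
      = (dyadic (N - 1) j).indicator 1 ((k:ℝ) * 2 ^ n) := by
    intro j
    rcases subset_or_disjoint (show n ≤ N - 1 by omega) (k := k) (j := j) with hs | hd
    · simp [Set.indicator_of_mem (hs hx), Set.indicator_of_mem (hs hx0)]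
    · rw [Set.indicator_of_notMem (Set.disjoint_left.1 hd hx),
        Set.indicator_of_notMem (Set.disjoint_left.1 hd hx0)]
  simp only [haarVal, haar]
  rw [key, key]

lemma integrable_indicator_one (n k : ℤ) :
    Integrable ((dyadic n k).indicator (1 : ℝ → ℝ)) := by
  rw [integrable_indicator_iff (measurableSet_dyadic n k)]
  refine integrableOn_const (lt_top_iff_ne_top.1 ?_)
  rw [volume_dyadic]
  exact ENNReal.ofReal_lt_top

lemma measurable_haar (n k : ℤ) : Measurable (haar n k) := by
  unfold haar
  exact ((measurable_const.indicator (measurableSet_dyadic _ _)).sub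
    (measurable_const.indicator (measurableSet_dyadic _ _))).const_mul _

lemma norm_haar_le (n k : ℤ) (x : ℝ) : ‖haar n k x‖ ≤ 2 ^ (-(n:ℝ) / 2) * 2 := by
  have h : ∀ S : Set ℝ, |S.indicator (1 : ℝ → ℝ) x| ≤ 1 := by
    intro S
    by_cases hm : x ∈ S <;> simp [hm]
  have hp : (0:ℝ) < 2 ^ (-(n:ℝ) / 2) := Real.rpow_pos_of_pos (by norm_num) _
  have h1 := h (dyadic (n - 1) (2 * k + 1))
  have h2 := h (dyadic (n - 1) (2 * k))
  rw [haar, Real.norm_eq_abs, abs_mul, abs_of_pos hp]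
  have habs : |(dyadic (n - 1) (2 * k + 1)).indicator (1:ℝ→ℝ) x
      - (dyadic (n - 1) (2 * k)).indicator 1 x| ≤ 2 := by
    rw [abs_sub_le_iff]
    constructor <;> [skip; skip] <;>
      cases' abs_le.1 h1 with a b <;> cases' abs_le.1 h2 with cc d <;> linarith
  nlinarith

lemma integrable_haar (n k : ℤ) : Integrable (haar n k) := by
  have h := ((integrable_indicator_one (n - 1) (2 * k + 1)).sub
    (integrable_indicator_one (n - 1) (2 * k))).const_mul ((2:ℝ) ^ (-(n:ℝ) / 2))
  exact h.congr (Eventually.of_forall fun x => rfl)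

lemma integrable_haar_mul (N K n k : ℤ) :
    Integrable (fun x => haar N K x * haar n k x) :=
  (integrable_haar n k).bdd_mul (measurable_haar N K).aestronglyMeasurable
    (Eventually.of_forall fun x => norm_haar_le N K x)

lemma integrable_haar_mul_indicator (N K m j : ℤ) :
    Integrable (fun x => haar N K x * (dyadic m j).indicator 1 x) :=
  (integrable_indicator_one m j).bdd_mul (measurable_haar N K).aestronglyMeasurable
    (Eventually.of_forall fun x => norm_haar_le N K x)

lemma setIntegral_ind (n k m j : ℤ) :
    ∫ x in dyadic n k, (dyadic m j).indicator (1 : ℝ → ℝ) x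
      = (volume (dyadic n k ∩ dyadic m j)).toReal := by
  rw [setIntegral_indicator (measurableSet_dyadic m j)]
  simp [MeasureTheory.integral_const, Measure.restrict_apply_univ, measureReal_def]

lemma setIntegral_haar_expand (n k N K : ℤ) :
    ∫ x in dyadic n k, haar N K x
      = 2 ^ (-(N:ℝ) / 2) * ((volume (dyadic n k ∩ dyadic (N - 1) (2 * K + 1))).toReal
          - (volume (dyadic n k ∩ dyadic (N - 1) (2 * K))).toReal) := by
  simp only [haar]
  rw [integral_const_mul]
  congr 1
  rw [integral_sub ((integrable_indicator_one _ _).integrableOn)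
    ((integrable_indicator_one _ _).integrableOn), setIntegral_ind, setIntegral_ind]

lemma setIntegral_haar (N K n k : ℤ) :
    ∫ x in dyadic n k, haar N K x = if n < N then 2 ^ n * haarVal N K n k else 0 := by
  split_ifs with h
  · rw [setIntegral_congr_fun (measurableSet_dyadic n k) (fun x hx => haar_constOn h hx),
      setIntegral_const, measureReal_def, volume_dyadic_toReal, smul_eq_mul]
  · push_neg at h
    rcases subset_or_disjoint h (k := K) (j := k) with hs | hd
    · have hB : dyadic n k ∩ dyadic (N - 1) (2 * K + 1) = dyadic (N - 1) (2 * K + 1) :=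
        Set.inter_eq_self_of_subset_right ((half_right_subset N K).trans hs)
      have hA : dyadic n k ∩ dyadic (N - 1) (2 * K) = dyadic (N - 1) (2 * K) :=
        Set.inter_eq_self_of_subset_right ((half_left_subset N K).trans hs)
      rw [setIntegral_haar_expand, hB, hA, volume_dyadic_toReal, volume_dyadic_toReal,
        sub_self, mul_zero]
    · have hz : ∀ x ∈ dyadic n k, haar N K x = 0 := fun x hx =>
        haar_eq_zero (Set.disjoint_right.1 hd hx)
      rw [setIntegral_congr_fun (measurableSet_dyadic n k) hz]
      simp

lemma avg_haar (N K n k : ℤ) :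
    avg (haar N K) n k = if n < N then haarVal N K n k else 0 := by
  unfold avg
  rw [setIntegral_haar]
  have h1 : (2:ℝ) ^ (-n) * 2 ^ n = 1 := by
    rw [← zpow_add₀ (two_ne_zero : (2:ℝ) ≠ 0)]
    norm_num
  split_ifs with h
  · rw [← mul_assoc, h1, one_mul]
  · exact mul_zero _

lemma integral_mul_indicator (f : ℝ → ℝ) (S : Set ℝ) (hS : MeasurableSet S) :
    ∫ x, f x * S.indicator 1 x = ∫ x in S, f x := by
  rw [← integral_indicator hS]
  congr 1
  funext x
  by_cases h : x ∈ S <;> simp [h]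

lemma innH_haar (N K n k : ℤ) :
    innH (haar N K) n k = if N = n ∧ K = k then 1 else 0 := by
  have hm1 : ((2 * k + 1 : ℤ):ℝ) * 2 ^ (n - 1) ∈ dyadic n k :=
    half_right_subset n k (left_mem_dyadic _ _)
  have hm2 : ((2 * k : ℤ):ℝ) * 2 ^ (n - 1) ∈ dyadic n k :=
    half_left_subset n k (left_mem_dyadic _ _)
  have expand : innH (haar N K) n k
      = 2 ^ (-(n:ℝ) / 2) * ((∫ x in dyadic (n - 1) (2 * k + 1), haar N K x)
          - ∫ x in dyadic (n - 1) (2 * k), haar N K x) := by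
    unfold innH
    have hfun : (fun x => haar N K x * haar n k x)
        = fun x => 2 ^ (-(n:ℝ) / 2) *
            (haar N K x * (dyadic (n - 1) (2 * k + 1)).indicator 1 x
              - haar N K x * (dyadic (n - 1) (2 * k)).indicator 1 x) := by
      funext x
      simp only [haar]
      ring
    rw [hfun, integral_const_mul,
      integral_sub (integrable_haar_mul_indicator N K _ _) (integrable_haar_mul_indicator N K _ _),
      integral_mul_indicator _ _ (measurableSet_dyadic _ _),
      integral_mul_indicator _ _ (measurableSet_dyadic _ _)]
  rw [expand, setIntegral_haar, setIntegral_haar]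
  by_cases hn : n - 1 < N
  · rw [if_pos hn, if_pos hn]
    by_cases hnN : N = n
    · subst hnN
      by_cases hk : K = k
      · subst hk
        rw [if_pos ⟨rfl, rfl⟩]
        have hv1 : haarVal N K (N - 1) (2 * K + 1) = 2 ^ (-(N:ℝ) / 2) :=
          haar_pos (left_mem_dyadic (N - 1) (2 * K + 1))
        have hv2 : haarVal N K (N - 1) (2 * K) = -(2 ^ (-(N:ℝ) / 2)) :=
          haar_neg (left_mem_dyadic (N - 1) (2 * K))
        rw [hv1, hv2]
        have hz : (2:ℝ) ^ (N - 1) * 2 = 2 ^ N := (two_zpow_half N).symm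
        have hr : (2:ℝ) ^ (-(N:ℝ) / 2) * 2 ^ (-(N:ℝ) / 2) = 2 ^ (-(N:ℝ)) := by
          rw [← Real.rpow_add (by norm_num : (0:ℝ) < 2)]
          ring_nf
        have hinv : (2:ℝ) ^ (-(N:ℝ)) * 2 ^ (N : ℤ) = 1 := by
          rw [← Real.rpow_intCast 2 N, ← Real.rpow_add (by norm_num : (0:ℝ) < 2)]
          norm_num
        calc (2:ℝ) ^ (-(N:ℝ) / 2) *
              (2 ^ (N - 1) * 2 ^ (-(N:ℝ) / 2) - 2 ^ (N - 1) * -(2 ^ (-(N:ℝ) / 2)))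
            = ((2:ℝ) ^ (-(N:ℝ) / 2) * 2 ^ (-(N:ℝ) / 2)) * ((2:ℝ) ^ (N - 1 : ℤ) * 2) := by ring
          _ = 1 := by rw [hr, hz, hinv]
      · rw [if_neg (by tauto)]
        have hv1 : haarVal N K (N - 1) (2 * k + 1) = 0 :=
          haar_eq_zero (Set.disjoint_left.1 (dyadic_disjoint hk).symm hm1)
        have hv2 : haarVal N K (N - 1) (2 * k) = 0 :=
          haar_eq_zero (Set.disjoint_left.1 (dyadic_disjoint hk).symm hm2)
        rw [hv1, hv2]
        ring
    · have hn' : n < N := by omega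
      rw [if_neg (by tauto)]
      have h1 : haarVal N K (n - 1) (2 * k + 1) = haarVal N K n k := by
        rw [haarVal, haar_constOn hn' hm1]
      have h2 : haarVal N K (n - 1) (2 * k) = haarVal N K n k := by
        rw [haarVal, haar_constOn hn' hm2]
      rw [h1, h2]
      ring
  · rw [if_neg hn, if_neg hn, if_neg (by omega)]
    ring

/-- The dyadic index of the interval at scale `n` containing `x`. -/
noncomputable def kOf (n : ℤ) (x : ℝ) : ℤ := ⌊x / 2 ^ n⌋

lemma mem_kOf (n : ℤ) (x : ℝ) : x ∈ dyadic n (kOf n x) := mem_dyadic_iff.2 rfl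

lemma kOf_eq {n k : ℤ} {x : ℝ} (h : x ∈ dyadic n k) : kOf n x = k := mem_dyadic_iff.1 h

lemma Ts_haar (s : ℝ) (hs0 : 0 < s) (N K : ℤ) (x : ℝ) :
    Summable (fun p : ℤ × ℤ =>
        (2:ℝ) ^ ((p.1 : ℝ) * s) * avg (haar N K) p.1 p.2 * (dyadic p.1 p.2).indicator 1 x) ∧
      ((2:ℝ) ^ s - 1) * ∑' p : ℤ × ℤ,
          (2:ℝ) ^ ((p.1 : ℝ) * s) * avg (haar N K) p.1 p.2 * (dyadic p.1 p.2).indicator 1 x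
        = (2:ℝ) ^ ((N : ℝ) * s) * haar N K x := by
  set G : ℤ × ℤ → ℝ := fun p =>
    (2:ℝ) ^ ((p.1 : ℝ) * s) * avg (haar N K) p.1 p.2 * (dyadic p.1 p.2).indicator 1 x with hG
  set e : ℕ → ℤ × ℤ := fun m => ((N - 1 - m : ℤ), kOf (N - 1 - m) x) with he
  have heinj : Function.Injective e := by
    intro m m' hmm
    have h1 : (N - 1 - m : ℤ) = N - 1 - m' := congrArg Prod.fst hmm
    omega
  have hsupp : Function.support G ⊆ Set.range e := by
    intro p hp
    rw [Function.mem_support] at hp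
    have hlt : p.1 < N := by
      by_contra hc
      apply hp
      rw [hG]
      simp only
      rw [avg_haar, if_neg hc, mul_zero, zero_mul]
    have hmem : x ∈ dyadic p.1 p.2 := by
      by_contra hc
      apply hp
      rw [hG]
      simp only
      rw [Set.indicator_of_notMem hc, mul_zero]
    refine ⟨(N - 1 - p.1).toNat, ?_⟩
    have h1 : (N - 1 - ((N - 1 - p.1).toNat : ℤ)) = p.1 := by omega
    rw [he]
    simp only
    exact Prod.ext h1 (by rw [h1, kOf_eq hmem])
  have hval : ∀ m : ℕ,
      G (e m) = (haar N K x * (2:ℝ) ^ (((N:ℝ) - 1) * s)) * ((2:ℝ) ^ (-s)) ^ m := by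
    intro m
    have hm : x ∈ dyadic (N - 1 - m) (kOf (N - 1 - m) x) := mem_kOf _ _
    have hlt : (N - 1 - (m:ℤ)) < N := by omega
    rw [hG, he]
    simp only
    rw [avg_haar, if_pos hlt, Set.indicator_of_mem hm, ← haar_constOn hlt hm]
    have hpow : (2:ℝ) ^ (((N - 1 - (m:ℤ) : ℤ) : ℝ) * s)
        = (2:ℝ) ^ (((N:ℝ) - 1) * s) * ((2:ℝ) ^ (-s)) ^ m := by
      rw [← Real.rpow_natCast ((2:ℝ) ^ (-s)) m, ← Real.rpow_mul (by norm_num : (0:ℝ) ≤ 2),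
        ← Real.rpow_add (by norm_num : (0:ℝ) < 2)]
      congr 1
      push_cast
      ring
    rw [hpow]
    simp only [Pi.one_apply]
    ring
  have hr0 : (0:ℝ) ≤ 2 ^ (-s) := Real.rpow_nonneg (by norm_num) _
  have hr1 : (2:ℝ) ^ (-s) < 1 :=
    Real.rpow_lt_one_of_one_lt_of_neg (by norm_num) (by linarith)
  have hsum0 : Summable (fun m : ℕ =>
      (haar N K x * (2:ℝ) ^ (((N:ℝ) - 1) * s)) * ((2:ℝ) ^ (-s)) ^ m) :=
    (summable_geometric_of_lt_one hr0 hr1).mul_left _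
  have hGe : Summable (G ∘ e) := hsum0.congr fun m => (hval m).symm
  have hGz : ∀ p ∉ Set.range e, G p = 0 := by
    intro p hp
    by_contra hc
    exact hp (hsupp (Function.mem_support.2 hc))
  have hGsum : Summable G := (heinj.summable_iff hGz).1 hGe
  refine ⟨hGsum, ?_⟩
  have htsum : ∑' p, G p = ∑' m, G (e m) := (heinj.tsum_eq (by exact hsupp)).symm
  rw [htsum]
  have : ∑' m : ℕ, G (e m)
      = (haar N K x * (2:ℝ) ^ (((N:ℝ) - 1) * s)) * (1 - 2 ^ (-s))⁻¹ := by
    rw [tsum_congr hval, tsum_mul_left, tsum_geometric_of_lt_one hr0 hr1]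
  rw [this]
  have hss : (2:ℝ) ^ s * (2:ℝ) ^ (-s) = 1 := by
    rw [← Real.rpow_add (by norm_num : (0:ℝ) < 2)]
    norm_num
  have hkey : (2:ℝ) ^ s - 1 = 2 ^ s * (1 - 2 ^ (-s)) := by
    rw [mul_sub, mul_one, hss]
  have hne : (1:ℝ) - 2 ^ (-s) ≠ 0 := ne_of_gt (by linarith)
  have h2 : (2:ℝ) ^ (((N:ℝ) - 1) * s) * 2 ^ s = 2 ^ ((N:ℝ) * s) := by
    rw [← Real.rpow_add (by norm_num : (0:ℝ) < 2)]
    congr 1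
    ring
  rw [hkey]
  have hcancel : (1 - (2:ℝ) ^ (-s)) * (1 - 2 ^ (-s))⁻¹ = 1 := mul_inv_cancel₀ hne
  calc (2:ℝ) ^ s * (1 - 2 ^ (-s)) * (haar N K x * 2 ^ (((N:ℝ) - 1) * s) * (1 - 2 ^ (-s))⁻¹)
      = (2 ^ (((N:ℝ) - 1) * s) * 2 ^ s) * haar N K x * ((1 - 2 ^ (-s)) * (1 - 2 ^ (-s))⁻¹) := by
        ring
    _ = (2:ℝ) ^ ((N:ℝ) * s) * haar N K x := by rw [h2, hcancel, mul_one]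

end DyadicMSAux

set_option maxHeartbeats 2000000 in
open DyadicMSAux in
theorem dyadic_MS (s : ℝ) (hs0 : 0 < s) (hs1 : s < 1) (f : ℝ → ℝ) (hf : f ∈ haarSpan) :
    ∀ᵐ x ∂(volume : Measure ℝ), f x = ((2 : ℝ) ^ s - 1) * Ts s (Ds s f) x := by
  rw [haarSpan, Finsupp.mem_span_range_iff_exists_finsupp] at hf
  obtain ⟨c, hc⟩ := hf
  have hfx : ∀ y, f y = ∑ q ∈ c.support, c q * haar q.1 q.2 y := by
    intro y
    rw [← hc, Finsupp.sum, Finset.sum_apply]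
    simp [smul_eq_mul]
  have hinn : ∀ n k : ℤ, innH f n k = c (n, k) := by
    intro n k
    unfold innH
    have hfun : (fun x => f x * haar n k x)
        = fun x => ∑ q ∈ c.support, c q * (haar q.1 q.2 x * haar n k x) := by
      funext y
      rw [hfx y, Finset.sum_mul]
      exact Finset.sum_congr rfl fun q _ => mul_assoc _ _ _
    rw [hfun, integral_finset_sum _ (fun q _ => (integrable_haar_mul q.1 q.2 n k).const_mul (c q))]
    have hterm : ∀ q ∈ c.support,
        ∫ x, c q * (haar q.1 q.2 x * haar n k x) = if q = (n, k) then c q else 0 := by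
      intro q _
      rw [integral_const_mul]
      have : (∫ x, haar q.1 q.2 x * haar n k x) = innH (haar q.1 q.2) n k := rfl
      rw [this, innH_haar]
      by_cases h : q = (n, k)
      · subst h
        simp
      · rw [if_neg (fun hh => h (Prod.ext hh.1 hh.2)), if_neg h, mul_zero]
    rw [Finset.sum_congr rfl hterm, Finset.sum_ite_eq' c.support (n, k) (fun q => c q)]
    split_ifs with h
    · rfl
    · exact (Finsupp.notMem_support_iff.1 h).symm
  have hDs : ∀ y, Ds s f y
      = ∑ q ∈ c.support, (c q * 2 ^ (-(q.1:ℝ) * s)) * haar q.1 q.2 y := by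
    intro y
    unfold Ds
    rw [tsum_eq_sum (s := c.support) (f := fun p : ℤ × ℤ =>
      (2:ℝ) ^ (-(p.1:ℝ) * s) * innH f p.1 p.2 * haar p.1 p.2 y)
      (fun p hp => by
        show (2:ℝ) ^ (-(p.1:ℝ) * s) * innH f p.1 p.2 * haar p.1 p.2 y = 0
        rw [hinn p.1 p.2]
        have : c (p.1, p.2) = 0 := by
          rw [Prod.mk.eta]
          exact Finsupp.notMem_support_iff.1 hp
        rw [this, mul_zero, zero_mul])]
    refine Finset.sum_congr rfl fun q _ => ?_
    rw [hinn q.1 q.2, Prod.mk.eta]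
    ring
  have havg : ∀ n k : ℤ, avg (Ds s f) n k
      = ∑ q ∈ c.support, (c q * 2 ^ (-(q.1:ℝ) * s)) * avg (haar q.1 q.2) n k := by
    intro n k
    unfold avg
    rw [setIntegral_congr_fun (measurableSet_dyadic n k) (fun y _ => hDs y),
      integral_finset_sum _ (fun q _ => ((integrable_haar q.1 q.2).integrableOn).const_mul _),
      Finset.mul_sum]
    refine Finset.sum_congr rfl fun q _ => ?_
    rw [integral_const_mul]
    ring
  refine Eventually.of_forall fun x => ?_
  have hterm : (fun p : ℤ × ℤ =>
        (2:ℝ) ^ ((p.1:ℝ) * s) * avg (Ds s f) p.1 p.2 * (dyadic p.1 p.2).indicator 1 x)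
      = fun p => ∑ q ∈ c.support, (c q * 2 ^ (-(q.1:ℝ) * s)) *
          ((2:ℝ) ^ ((p.1:ℝ) * s) * avg (haar q.1 q.2) p.1 p.2 * (dyadic p.1 p.2).indicator 1 x) := by
    funext p
    rw [havg p.1 p.2, Finset.mul_sum, Finset.sum_mul]
    exact Finset.sum_congr rfl fun q _ => by ring
  have hTs : Ts s (Ds s f) x = ∑ q ∈ c.support, (c q * 2 ^ (-(q.1:ℝ) * s)) *
      ∑' p : ℤ × ℤ,
        (2:ℝ) ^ ((p.1:ℝ) * s) * avg (haar q.1 q.2) p.1 p.2 * (dyadic p.1 p.2).indicator 1 x := by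
    unfold Ts
    rw [hterm, Summable.tsum_finsetSum (fun q _ => ((Ts_haar s hs0 q.1 q.2 x).1).mul_left _)]
    exact Finset.sum_congr rfl fun q _ => tsum_mul_left
  rw [hTs, Finset.mul_sum]
  have hfinal : ∀ q ∈ c.support,
      ((2:ℝ) ^ s - 1) * ((c q * 2 ^ (-(q.1:ℝ) * s)) *
        ∑' p : ℤ × ℤ,
          (2:ℝ) ^ ((p.1:ℝ) * s) * avg (haar q.1 q.2) p.1 p.2 * (dyadic p.1 p.2).indicator 1 x)
      = c q * haar q.1 q.2 x := by
    intro q _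
    have h1 := (Ts_haar s hs0 q.1 q.2 x).2
    have h2 : (2:ℝ) ^ (-(q.1:ℝ) * s) * (2:ℝ) ^ ((q.1:ℝ) * s) = 1 := by
      rw [← Real.rpow_add (by norm_num : (0:ℝ) < 2)]
      norm_num
    generalize hT : (∑' p : ℤ × ℤ,
      (2:ℝ) ^ ((p.1:ℝ) * s) * avg (haar q.1 q.2) p.1 p.2 * (dyadic p.1 p.2).indicator 1 x) = T at h1 ⊢
    linear_combination (c q * 2 ^ (-(q.1:ℝ) * s)) * h1 + (c q * haar q.1 q.2 x) * h2
  rw [Finset.sum_congr rfl hfinal]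
  exact hfx x
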